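/- The minimum over θ of the C-DQN loss is monotonically non-increasing along the target-network iteration: if θ̃_{i+1} = argmin_θ L_CDQN(θ; θ̃_i), then min_θ L_CDQN(θ; θ̃_{i+1}) ≤ min_θ L_CDQN(θ; θ̃_i). -/
import Mathlib


open Finset

/-- The minimum of the C-DQN loss is non-increasing along the target-network
iteration: if `θ̃'` is an argmin of `θ ↦ L_CDQN(θ; θ̃)`, then
`min_θ L_CDQN(θ; θ̃') ≤ min_θ L_CDQN(θ; θ̃)`.  Here
`L_CDQN(θ; θ̃)` is the average over a fixed finite dataset of
`max{ℓ_DQN(θ; θ̃), ℓ_MSBE(θ)}` for nonnegative per-sample losses satisfying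
the diagonal identity `ℓ_DQN(θ, θ) = ℓ_MSBE(θ)`. -/
theorem stmt_7 {Θ : Type*} [Fintype Θ] [Nonempty Θ]
    {D : Type*} [Fintype D] [Nonempty D]
    (ℓDQN : D → Θ → Θ → ℝ) (ℓMSBE : D → Θ → ℝ)
    (hDQN0 : ∀ d θ θt, 0 ≤ ℓDQN d θ θt)
    (hMSBE0 : ∀ d θ, 0 ≤ ℓMSBE d θ)
    (hdiag : ∀ d θ, ℓDQN d θ θ = ℓMSBE d θ)
    (L : Θ → Θ → ℝ)
    (hL : ∀ θ θt, L θ θt =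
      (∑ d : D, max (ℓDQN d θ θt) (ℓMSBE d θ)) / (Fintype.card D))
    (θt θt' : Θ)
    (hargmin : ∀ θ : Θ, L θt' θt ≤ L θ θt) :
    (⨅ θ : Θ, L θ θt') ≤ ⨅ θ : Θ, L θ θt := by
  have key : L θt' θt' ≤ L θt' θt := by
    rw [hL, hL]
    have hc : (0:ℝ) ≤ (Fintype.card D : ℝ)⁻¹ := by positivity
    rw [div_eq_mul_inv, div_eq_mul_inv]
    refine mul_le_mul_of_nonneg_right (Finset.sum_le_sum fun d _ => ?_) hc
    rw [hdiag, max_self]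
    exact le_max_right _ _
  refine le_trans (ciInf_le (Finite.bddBelow_range _) θt') ?_
  exact le_trans key (le_ciInf fun θ => hargmin θ)
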